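/- Fix m ∈ ℕ and define h_m : (0,π) → ℂ by h_m(η) = (15/16) ∫₀^π (cos η + i·sin η·cos φ)^m · sin⁵φ dφ. Then h_m is twice differentiable and h_m''(η) + 6 cot η · h_m'(η) = −m(m+6)·h_m(η) for all η ∈ (0,π). -/

import Mathlib

open Real Complex

/-- The eigenfunction `h_m(η) = (15/16) ∫₀^π (cos η + i sin η cos φ)^m sin⁵φ dφ`. -/
noncomputable def sphericalEigenfunction (m : ℕ) (η : ℝ) : ℂ :=
  (15 / 16 : ℂ) * ∫ φ in (0 : ℝ)..π,
    ((Real.cos η : ℂ) + Complex.I * (Real.sin η : ℂ) * (Real.cos φ : ℂ)) ^ m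
      * (Real.sin φ : ℂ) ^ 5

namespace SphEigAux

/-- Derivative of a natural power of a complex-valued function of a real variable. -/
lemma hasDerivAt_cpow_nat (n : ℕ) {f : ℝ → ℂ} {f' : ℂ} {x : ℝ} (hf : HasDerivAt f f' x) :
    HasDerivAt (fun y => f y ^ n) ((n : ℂ) * f x ^ (n - 1) * f') x := by
  induction n with
  | zero => simpa using hasDerivAt_const x (1 : ℂ)
  | succ k ih =>
    cases k with
    | zero => simpa using hf
    | succ j =>
      have h := ih.mul hf
      convert h using 1
      · rfl
      · funext y; simp only [Pi.mul_apply]; ring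
      simp only [Nat.add_sub_cancel, Nat.cast_add, Nat.cast_one]
      ring

/-- `w(η,φ) = cos η + i sin η cos φ`. -/
noncomputable def W (η φ : ℝ) : ℂ :=
  (Real.cos η : ℂ) + Complex.I * (Real.sin η : ℂ) * (Real.cos φ : ℂ)

/-- `∂_η w = -sin η + i cos η cos φ`. -/
noncomputable def Wd (η φ : ℝ) : ℂ :=
  -(Real.sin η : ℂ) + Complex.I * (Real.cos η : ℂ) * (Real.cos φ : ℂ)

noncomputable def F0 (m : ℕ) (η φ : ℝ) : ℂ := W η φ ^ m * (Real.sin φ : ℂ) ^ 5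

noncomputable def F1 (m : ℕ) (η φ : ℝ) : ℂ :=
  (m : ℂ) * W η φ ^ (m - 1) * Wd η φ * (Real.sin φ : ℂ) ^ 5

noncomputable def F2 (m : ℕ) (η φ : ℝ) : ℂ :=
  ((m : ℂ) * (((m - 1 : ℕ)) : ℂ) * W η φ ^ (m - 1 - 1) * Wd η φ * Wd η φ
    + (m : ℂ) * W η φ ^ (m - 1) * (-W η φ)) * (Real.sin φ : ℂ) ^ 5

lemma hasDerivAt_W (φ η : ℝ) : HasDerivAt (fun η => W η φ) (Wd η φ) η := by
  have hc := (Real.hasDerivAt_cos η).ofReal_comp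
  have hs := (Real.hasDerivAt_sin η).ofReal_comp
  have h := hc.add ((hs.const_mul (Complex.I)).mul_const ((Real.cos φ : ℂ)))
  refine h.congr_deriv ?_
  unfold Wd; push_cast; ring

lemma hasDerivAt_Wd (φ η : ℝ) : HasDerivAt (fun η => Wd η φ) (-W η φ) η := by
  have hc := (Real.hasDerivAt_cos η).ofReal_comp
  have hs := (Real.hasDerivAt_sin η).ofReal_comp
  have h := hs.neg.add ((hc.const_mul (Complex.I)).mul_const ((Real.cos φ : ℂ)))
  refine h.congr_deriv ?_
  unfold W; push_cast; ring

lemma hasDerivAt_F0 (m : ℕ) (φ η : ℝ) :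
    HasDerivAt (fun η => F0 m η φ) (F1 m η φ) η := by
  have h := (hasDerivAt_cpow_nat m (hasDerivAt_W φ η)).mul_const ((Real.sin φ : ℂ) ^ 5)
  exact h

lemma hasDerivAt_F1 (m : ℕ) (φ η : ℝ) :
    HasDerivAt (fun η => F1 m η φ) (F2 m η φ) η := by
  have h := (((hasDerivAt_cpow_nat (m - 1) (hasDerivAt_W φ η)).const_mul
      ((m : ℂ))).mul (hasDerivAt_Wd φ η)).mul_const ((Real.sin φ : ℂ) ^ 5)
  refine h.congr_deriv ?_
  unfold F2; ring

lemma normW_le (η φ : ℝ) : ‖W η φ‖ ≤ 1 := by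
  have h : W η φ = (Real.cos η : ℂ) + (Real.sin η * Real.cos φ : ℝ) * Complex.I := by
    unfold W; push_cast; ring
  rw [h, Complex.norm_add_mul_I, Real.sqrt_le_one]
  nlinarith [Real.sin_sq_add_cos_sq η, Real.cos_sq_le_one φ, sq_nonneg (Real.sin η),
    sq_nonneg (Real.cos φ)]

lemma normWd_le (η φ : ℝ) : ‖Wd η φ‖ ≤ 1 := by
  have h : Wd η φ = ((-Real.sin η : ℝ) : ℂ) + (Real.cos η * Real.cos φ : ℝ) * Complex.I := by
    unfold Wd; push_cast; ring
  rw [h, Complex.norm_add_mul_I, Real.sqrt_le_one]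
  nlinarith [Real.sin_sq_add_cos_sq η, Real.cos_sq_le_one φ, sq_nonneg (Real.cos η),
    sq_nonneg (Real.cos φ)]

lemma norm_sin_pow_le (φ : ℝ) (k : ℕ) : ‖(Real.sin φ : ℂ) ^ k‖ ≤ 1 := by
  rw [norm_pow]
  apply pow_le_one₀ (norm_nonneg _)
  rw [Complex.norm_real, Real.norm_eq_abs]
  exact Real.abs_sin_le_one φ

lemma norm_F1_le (m : ℕ) (η φ : ℝ) : ‖F1 m η φ‖ ≤ (m : ℝ) := by
  unfold F1
  calc ‖(m : ℂ) * W η φ ^ (m - 1) * Wd η φ * (Real.sin φ : ℂ) ^ 5‖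
      = ‖(m : ℂ)‖ * ‖W η φ ^ (m - 1)‖ * ‖Wd η φ‖ * ‖(Real.sin φ : ℂ) ^ 5‖ := by
        rw [norm_mul, norm_mul, norm_mul]
    _ ≤ (m : ℝ) * 1 * 1 * 1 := by
        gcongr
        · simp
        · rw [norm_pow]; exact pow_le_one₀ (norm_nonneg _) (normW_le η φ)
        · exact normWd_le η φ
        · exact norm_sin_pow_le φ 5
    _ = (m : ℝ) := by ring

lemma norm_F2_le (m : ℕ) (η φ : ℝ) : ‖F2 m η φ‖ ≤ (m : ℝ) * m + m := by
  unfold F2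
  have h1 : ‖(m : ℂ) * (((m - 1 : ℕ)) : ℂ) * W η φ ^ (m - 1 - 1) * Wd η φ * Wd η φ‖
      ≤ (m : ℝ) * m := by
    calc ‖(m : ℂ) * (((m - 1 : ℕ)) : ℂ) * W η φ ^ (m - 1 - 1) * Wd η φ * Wd η φ‖
        = ‖(m : ℂ)‖ * ‖(((m - 1 : ℕ)) : ℂ)‖ * ‖W η φ ^ (m - 1 - 1)‖ * ‖Wd η φ‖ * ‖Wd η φ‖ := by
          rw [norm_mul, norm_mul, norm_mul, norm_mul]
      _ ≤ (m : ℝ) * m * 1 * 1 * 1 := by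
          gcongr
          · simp
          · simp only [Complex.norm_natCast]
            exact_mod_cast Nat.cast_le.mpr (Nat.sub_le m 1)
          · rw [norm_pow]; exact pow_le_one₀ (norm_nonneg _) (normW_le η φ)
          · exact normWd_le η φ
          · exact normWd_le η φ
      _ = (m : ℝ) * m := by ring
  have h2 : ‖(m : ℂ) * W η φ ^ (m - 1) * (-W η φ)‖ ≤ (m : ℝ) := by
    calc ‖(m : ℂ) * W η φ ^ (m - 1) * (-W η φ)‖
        = ‖(m : ℂ)‖ * ‖W η φ ^ (m - 1)‖ * ‖W η φ‖ := by
          rw [norm_mul, norm_mul, norm_neg]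
      _ ≤ (m : ℝ) * 1 * 1 := by
          gcongr
          · simp
          · rw [norm_pow]; exact pow_le_one₀ (norm_nonneg _) (normW_le η φ)
          · exact normW_le η φ
      _ = (m : ℝ) := by ring
  calc ‖_ * (Real.sin φ : ℂ) ^ 5‖
      ≤ ‖(m : ℂ) * (((m - 1 : ℕ)) : ℂ) * W η φ ^ (m - 1 - 1) * Wd η φ * Wd η φ
          + (m : ℂ) * W η φ ^ (m - 1) * (-W η φ)‖ * 1 := by
        rw [norm_mul]; gcongr; exact norm_sin_pow_le φ 5
    _ ≤ ((m : ℝ) * m + m) * 1 := by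
        gcongr
        exact (norm_add_le _ _).trans (add_le_add h1 h2)
    _ = (m : ℝ) * m + m := by ring

lemma contF0 (m : ℕ) (η : ℝ) : Continuous (fun φ => F0 m η φ) := by
  unfold F0 W; fun_prop

lemma contF1 (m : ℕ) (η : ℝ) : Continuous (fun φ => F1 m η φ) := by
  unfold F1 W Wd; fun_prop

lemma contF2 (m : ℕ) (η : ℝ) : Continuous (fun φ => F2 m η φ) := by
  unfold F2 W Wd; fun_prop

lemma hasDerivAt_int0 (m : ℕ) (η : ℝ) :
    HasDerivAt (fun η => ∫ φ in (0:ℝ)..π, F0 m η φ) (∫ φ in (0:ℝ)..π, F1 m η φ) η := by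
  have h := intervalIntegral.hasDerivAt_integral_of_dominated_loc_of_deriv_le
    (F := fun η φ => F0 m η φ) (F' := fun η φ => F1 m η φ) (x₀ := η) (s := Metric.ball η 1)
    (bound := fun _ => (m : ℝ)) (a := (0:ℝ)) (b := π) (μ := MeasureTheory.volume)
    (Metric.ball_mem_nhds η zero_lt_one)
    (Filter.Eventually.of_forall fun x => (contF0 m x).aestronglyMeasurable)
    ((contF0 m η).intervalIntegrable _ _)
    ((contF1 m η).aestronglyMeasurable)
    (Filter.Eventually.of_forall fun t _ x _ => norm_F1_le m x t)
    intervalIntegrable_const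
    (Filter.Eventually.of_forall fun t _ x _ => hasDerivAt_F0 m t x)
  exact h.2

lemma hasDerivAt_int1 (m : ℕ) (η : ℝ) :
    HasDerivAt (fun η => ∫ φ in (0:ℝ)..π, F1 m η φ) (∫ φ in (0:ℝ)..π, F2 m η φ) η := by
  have h := intervalIntegral.hasDerivAt_integral_of_dominated_loc_of_deriv_le
    (F := fun η φ => F1 m η φ) (F' := fun η φ => F2 m η φ) (x₀ := η) (s := Metric.ball η 1)
    (bound := fun _ => (m : ℝ) * m + m) (a := (0:ℝ)) (b := π) (μ := MeasureTheory.volume)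
    (Metric.ball_mem_nhds η zero_lt_one)
    (Filter.Eventually.of_forall fun x => (contF1 m x).aestronglyMeasurable)
    ((contF1 m η).intervalIntegrable _ _)
    ((contF2 m η).aestronglyMeasurable)
    (Filter.Eventually.of_forall fun t _ x _ => norm_F2_le m x t)
    intervalIntegrable_const
    (Filter.Eventually.of_forall fun t _ x _ => hasDerivAt_F1 m t x)
  exact h.2

/-- Boundary function for the integration by parts in `φ`. -/
noncomputable def G (m : ℕ) (η φ : ℝ) : ℂ :=
  (m : ℂ) * Complex.I * (W η φ ^ (m - 1) * (Real.sin φ : ℂ) ^ 6)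

noncomputable def Gd (m : ℕ) (η φ : ℝ) : ℂ :=
  (m : ℂ) * Complex.I *
    ((((m - 1 : ℕ)) : ℂ) * W η φ ^ (m - 1 - 1)
        * (Complex.I * (Real.sin η : ℂ) * -(Real.sin φ : ℂ)) * (Real.sin φ : ℂ) ^ 6
      + W η φ ^ (m - 1) * ((6 : ℕ) * (Real.sin φ : ℂ) ^ 5 * (Real.cos φ : ℂ)))

lemma hasDerivAt_W_phi (η φ : ℝ) :
    HasDerivAt (fun φ => W η φ)
      (Complex.I * (Real.sin η : ℂ) * -(Real.sin φ : ℂ)) φ := by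
  have hc := (Real.hasDerivAt_cos φ).ofReal_comp
  have h := (hasDerivAt_const φ ((Real.cos η : ℂ))).add
    (hc.const_mul (Complex.I * (Real.sin η : ℂ)))
  refine h.congr_deriv ?_
  push_cast; ring

lemma hasDerivAt_G (m : ℕ) (η φ : ℝ) :
    HasDerivAt (fun φ => G m η φ) (Gd m η φ) φ := by
  have hsin := (Real.hasDerivAt_sin φ).ofReal_comp
  have h := ((hasDerivAt_cpow_nat (m - 1) (hasDerivAt_W_phi η φ)).mul
    (hasDerivAt_cpow_nat 6 hsin)).const_mul ((m : ℂ) * Complex.I)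
  exact h

lemma contGd (m : ℕ) (η : ℝ) : Continuous (fun φ => Gd m η φ) := by
  unfold Gd W; fun_prop

/-- The key pointwise identity (integrand of the ODE, multiplied by `sin η`). -/
lemma key_identity (m : ℕ) (η φ : ℝ) :
    (Real.sin η : ℂ) * F2 m η φ + 6 * (Real.cos η : ℂ) * F1 m η φ
      + (m : ℂ) * ((m : ℂ) + 6) * (Real.sin η : ℂ) * F0 m η φ = Gd m η φ := by
  have h1 : (Real.cos η : ℂ) ^ 2 + (Real.sin η : ℂ) ^ 2 = 1 := by
    have := Real.cos_sq_add_sin_sq η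
    exact_mod_cast congrArg (Complex.ofReal) this
  have h2 : (Real.cos φ : ℂ) ^ 2 + (Real.sin φ : ℂ) ^ 2 = 1 := by
    have := Real.cos_sq_add_sin_sq φ
    exact_mod_cast congrArg (Complex.ofReal) this
  have hI : (Complex.I) ^ 2 = -1 := Complex.I_sq
  have key2 : ((Real.cos η : ℂ) + Complex.I * (Real.sin η : ℂ) * (Real.cos φ : ℂ))
        * (Real.sin η : ℂ)
      + (Real.cos η : ℂ)
        * (-(Real.sin η : ℂ) + Complex.I * (Real.cos η : ℂ) * (Real.cos φ : ℂ))
      = Complex.I * (Real.cos φ : ℂ) := by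
    linear_combination Complex.I * (Real.cos φ : ℂ) * h1
  match m with
  | 0 => simp [F0, F1, F2, Gd]
  | 1 =>
    simp only [F0, F1, F2, Gd, W, Wd, Nat.cast_one, Nat.cast_zero, Nat.cast_ofNat,
      show (1:ℕ) - 1 = 0 from rfl, pow_zero, Nat.zero_sub]
    linear_combination 6 * (Real.sin φ : ℂ) ^ 5 * key2
  | (n+2) =>
    have key1 : (-(Real.sin η : ℂ) + Complex.I * (Real.cos η : ℂ) * (Real.cos φ : ℂ)) ^ 2
        + ((Real.cos η : ℂ) + Complex.I * (Real.sin η : ℂ) * (Real.cos φ : ℂ)) ^ 2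
        = (Real.sin φ : ℂ) ^ 2 := by
      linear_combination (1 + Complex.I ^ 2 * (Real.cos φ : ℂ) ^ 2) * h1 - h2
        + (Real.cos φ : ℂ) ^ 2 * hI
    simp only [F0, F1, F2, Gd, W, Wd, show n + 2 - 1 = n + 1 from rfl,
      show n + 2 - 1 - 1 = n from rfl, show n + 1 - 1 = n from rfl,
      Nat.cast_add, Nat.cast_ofNat, Nat.cast_one, pow_succ]
    linear_combination
      ((n:ℂ)+2) * ((n:ℂ)+1) * (Real.sin φ : ℂ)^5 * (Real.sin η : ℂ)
        * ((Real.cos η : ℂ) + Complex.I * (Real.sin η : ℂ) * (Real.cos φ : ℂ))^n * key1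
      + 6 * ((n:ℂ)+2) * (Real.sin φ : ℂ)^5
        * ((Real.cos η : ℂ) + Complex.I * (Real.sin η : ℂ) * (Real.cos φ : ℂ))^n
        * ((Real.cos η : ℂ) + Complex.I * (Real.sin η : ℂ) * (Real.cos φ : ℂ)) * key2
      + ((n:ℂ)+2) * ((n:ℂ)+1) * (Real.sin η : ℂ) * (Real.sin φ : ℂ)^7
        * ((Real.cos η : ℂ) + Complex.I * (Real.sin η : ℂ) * (Real.cos φ : ℂ))^n * hI

end SphEigAux

open SphEigAux in
/-- `h_m` is twice differentiable on `(0,π)` and satisfies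
`h_m'' + 6 cot η · h_m' = −m(m+6) h_m` there. -/
theorem sphericalEigenfunction_ode (m : ℕ) :
    ∀ η ∈ Set.Ioo (0 : ℝ) π,
      DifferentiableAt ℝ (sphericalEigenfunction m) η ∧
      DifferentiableAt ℝ (deriv (sphericalEigenfunction m)) η ∧
      deriv (deriv (sphericalEigenfunction m)) η
        + 6 * (Real.cot η : ℂ) * deriv (sphericalEigenfunction m) η
        = -((m : ℂ) * ((m : ℂ) + 6)) * sphericalEigenfunction m η := by
  have hfun : sphericalEigenfunction m
      = fun η => (15/16 : ℂ) * ∫ φ in (0:ℝ)..π, F0 m η φ := rfl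
  have hd1 : ∀ x : ℝ, HasDerivAt (sphericalEigenfunction m)
      ((15/16 : ℂ) * ∫ φ in (0:ℝ)..π, F1 m x φ) x := by
    intro x
    rw [hfun]
    exact (hasDerivAt_int0 m x).const_mul _
  have hder1 : deriv (sphericalEigenfunction m)
      = fun x => (15/16 : ℂ) * ∫ φ in (0:ℝ)..π, F1 m x φ :=
    funext fun x => (hd1 x).deriv
  have hd2 : ∀ x : ℝ, HasDerivAt (deriv (sphericalEigenfunction m))
      ((15/16 : ℂ) * ∫ φ in (0:ℝ)..π, F2 m x φ) x := by
    intro x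
    rw [hder1]
    exact (hasDerivAt_int1 m x).const_mul _
  intro η hη
  obtain ⟨hη0, hηπ⟩ := hη
  have hs : Real.sin η ≠ 0 := ne_of_gt (Real.sin_pos_of_pos_of_lt_pi hη0 hηπ)
  have hsC : (Real.sin η : ℂ) ≠ 0 := by exact_mod_cast hs
  refine ⟨(hd1 η).differentiableAt, (hd2 η).differentiableAt, ?_⟩
  rw [(hd2 η).deriv, hder1]
  have hi0 : IntervalIntegrable (fun φ => F0 m η φ) MeasureTheory.volume 0 π :=
    (contF0 m η).intervalIntegrable _ _
  have hi1 : IntervalIntegrable (fun φ => F1 m η φ) MeasureTheory.volume 0 π :=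
    (contF1 m η).intervalIntegrable _ _
  have hi2 : IntervalIntegrable (fun φ => F2 m η φ) MeasureTheory.volume 0 π :=
    (contF2 m η).intervalIntegrable _ _
  have hGd0 : (∫ φ in (0:ℝ)..π, Gd m η φ) = 0 := by
    rw [intervalIntegral.integral_eq_sub_of_hasDerivAt
      (fun φ _ => hasDerivAt_G m η φ) ((contGd m η).intervalIntegrable _ _)]
    simp [G]
  have hcongr : (∫ φ in (0:ℝ)..π,
      ((Real.sin η : ℂ) * F2 m η φ + (6 * (Real.cos η : ℂ)) * F1 m η φ
        + ((m : ℂ) * ((m : ℂ) + 6) * (Real.sin η : ℂ)) * F0 m η φ)) = 0 := by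
    rw [intervalIntegral.integral_congr
      (g := fun φ => Gd m η φ) (fun φ _ => key_identity m η φ)]
    exact hGd0
  have hsum : (Real.sin η : ℂ) * (∫ φ in (0:ℝ)..π, F2 m η φ)
      + (6 * (Real.cos η : ℂ)) * (∫ φ in (0:ℝ)..π, F1 m η φ)
      + ((m : ℂ) * ((m : ℂ) + 6) * (Real.sin η : ℂ)) * (∫ φ in (0:ℝ)..π, F0 m η φ) = 0 := by
    rw [← intervalIntegral.integral_const_mul, ← intervalIntegral.integral_const_mul,
      ← intervalIntegral.integral_const_mul,
      ← intervalIntegral.integral_add (hi2.const_mul _) (hi1.const_mul _),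
      ← intervalIntegral.integral_add
        ((hi2.const_mul _).add (hi1.const_mul _)) (hi0.const_mul _)]
    exact hcongr
  rw [hfun]
  rw [Real.cot_eq_cos_div_sin, Complex.ofReal_div]
  have hinv : (Real.sin η : ℂ) * ((Real.sin η : ℂ))⁻¹ = 1 := mul_inv_cancel₀ hsC
  linear_combination (15/16 : ℂ) * ((Real.sin η : ℂ))⁻¹ * hsum
    - (15/16 : ℂ) * ((∫ φ in (0:ℝ)..π, F2 m η φ)
        + (m : ℂ) * ((m : ℂ) + 6) * (∫ φ in (0:ℝ)..π, F0 m η φ)) * hinv
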